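/- Given a matched pair of 2-representations of the Lie–Rinehart algebras A and B on the module C, the map ∂_B : C → B intertwines the brackets: ∂_B(∇^{AC}_{∂_A c₁}c₂ − ∇^{BC}_{∂_B c₂}c₁) = [∂_B c₁, ∂_B c₂]_B for all c₁, c₂ ∈ C; together with condition (M1), ρ_B ∘ ∂_B = ρ_C, this says ∂_B is a morphism of Lie algebroids from the core Lie algebroid C to B. (Only the 2-representation identity ∂_B ∘ ∇^{AC}_a = ∇^{AB}_a ∘ ∂_B and condition (M4) are needed.) -/
import Mathlib


/-- A Lie–Rinehart algebra over a commutative `ℝ`-algebra `R`. -/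
structure LieRinehart (R : Type*) [CommRing R] [Algebra ℝ R]
    (L : Type*) [AddCommGroup L] [Module R L] where
  bracket : L → L → L
  bracket_add_left : ∀ x y z : L, bracket (x + y) z = bracket x z + bracket y z
  bracket_add_right : ∀ x y z : L, bracket x (y + z) = bracket x y + bracket x z
  bracket_real_left : ∀ (r : ℝ) (x y : L),
    bracket ((algebraMap ℝ R r) • x) y = (algebraMap ℝ R r) • bracket x y
  bracket_real_right : ∀ (r : ℝ) (x y : L),
    bracket x ((algebraMap ℝ R r) • y) = (algebraMap ℝ R r) • bracket x y
  bracket_antisymm : ∀ x y : L, bracket x y = - bracket y x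
  bracket_jacobi : ∀ x y z : L,
    bracket x (bracket y z) = bracket (bracket x y) z + bracket y (bracket x z)
  anchor : L →ₗ[R] Derivation ℝ R R
  anchor_bracket : ∀ x y : L, anchor (bracket x y) = ⁅anchor x, anchor y⁆
  leibniz : ∀ (f : R) (x y : L),
    bracket x (f • y) = f • bracket x y + (anchor x f) • y

/-- An `L`-connection on an `R`-module `E`, for `L` a Lie–Rinehart algebra. -/
structure LRConnection (R : Type*) [CommRing R] [Algebra ℝ R]
    {A : Type*} [AddCommGroup A] [Module R A]
    (LA : LieRinehart R A)
    (E : Type*) [AddCommGroup E] [Module R E] where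
  conn : A → E → E
  conn_add_left : ∀ (x y : A) (e : E), conn (x + y) e = conn x e + conn y e
  conn_add_right : ∀ (x : A) (e e' : E), conn x (e + e') = conn x e + conn x e'
  conn_smul_left : ∀ (f : R) (x : A) (e : E), conn (f • x) e = f • conn x e
  conn_leibniz : ∀ (f : R) (x : A) (e : E),
    conn x (f • e) = f • conn x e + (LA.anchor x f) • e

/-- `∂_B` intertwines the core bracket
`[c₁,c₂]_C = ∇^{AC}_{∂_A c₁} c₂ − ∇^{BC}_{∂_B c₂} c₁` with the bracket of `B`;
only the 2-representation identity `∂_B ∘ ∇^{AC}_a = ∇^{AB}_a ∘ ∂_B` and the matched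
pair condition (M4) are needed. -/
theorem dB_is_bracket_morphism
    {R : Type*} [CommRing R] [Algebra ℝ R]
    {A B C : Type*} [AddCommGroup A] [Module R A] [AddCommGroup B] [Module R B]
    [AddCommGroup C] [Module R C]
    (la : LieRinehart R A) (lb : LieRinehart R B)
    (dA : C →ₗ[R] A) (dB : C →ₗ[R] B)
    (nAC : LRConnection R la C) (nAB : LRConnection R la B) (nBC : LRConnection R lb C)
    (hrep : ∀ (a : A) (c : C), dB (nAC.conn a c) = nAB.conn a (dB c))
    (hM4 : ∀ (b : B) (c : C),
      lb.bracket b (dB c) = dB (nBC.conn b c) - nAB.conn (dA c) b) :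
    ∀ c₁ c₂ : C,
      dB (nAC.conn (dA c₁) c₂ - nBC.conn (dB c₂) c₁)
        = lb.bracket (dB c₁) (dB c₂) := by
  intro c₁ c₂
  have h := hM4 (dB c₂) c₁
  rw [map_sub, hrep, lb.bracket_antisymm (dB c₁) (dB c₂), h]
  abel
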